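/- A subset σ of a normal contact algebra (B,C) is a cluster if and only if there exists an ultrafilter u in B such that σ = {a ∈ B | aCb for every b ∈ u}. Moreover, given a cluster σ and a₀ ∈ σ, the ultrafilter u can be chosen to contain a₀. -/
import Mathlib


variable {B : Type*} [BooleanAlgebra B]

/-- A contact relation on a Boolean algebra: axioms (C1)-(C4). -/
def IsContactRel (C : B → B → Prop) : Prop :=
  (∀ a, a ≠ ⊥ → C a a) ∧
  (∀ a b, C a b → a ≠ ⊥ ∧ b ≠ ⊥) ∧
  (∀ a b, C a b → C b a) ∧
  (∀ a b c, C a (b ⊔ c) ↔ C a b ∨ C a c)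

/-- A normal contact relation: additionally axioms (C5) and (C6). -/
def IsNormalContactRel (C : B → B → Prop) : Prop :=
  IsContactRel C ∧
  (∀ a b, ¬ C a b → ∃ c, ¬ C a c ∧ ¬ C b cᶜ) ∧
  (∀ a, a ≠ ⊤ → ∃ b, b ≠ ⊥ ∧ ¬ C b a)

/-- A cluster in a contact algebra: axioms (K1)-(K3). -/
def IsCluster (C : B → B → Prop) (σ : Set B) : Prop :=
  σ.Nonempty ∧
  (∀ a ∈ σ, ∀ b ∈ σ, C a b) ∧
  (∀ a b, a ⊔ b ∈ σ → a ∈ σ ∨ b ∈ σ) ∧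
  (∀ a, (∀ b ∈ σ, C a b) → a ∈ σ)

/-- An ultrafilter in a Boolean algebra, as a set. -/
def IsUltrafilterSet (u : Set B) : Prop :=
  ⊤ ∈ u ∧ ⊥ ∉ u ∧
  (∀ a b, a ∈ u → a ≤ b → b ∈ u) ∧
  (∀ a b, a ∈ u → b ∈ u → a ⊓ b ∈ u) ∧
  (∀ a : B, a ∈ u ∨ aᶜ ∈ u)

/-- Monotonicity of a contact relation in its second argument. -/
lemma contact_mono_right (C : B → B → Prop) (hC : IsContactRel C)
    {a b b' : B} (h : C a b) (hb : b ≤ b') : C a b' := by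
  have : C a (b ⊔ b') := (hC.2.2.2 a b b').2 (Or.inl h)
  rwa [sup_eq_right.mpr hb] at this

/-- Monotonicity of a contact relation in its first argument. -/
lemma contact_mono_left (C : B → B → Prop) (hC : IsContactRel C)
    {a a' b : B} (h : C a b) (ha : a ≤ a') : C a' b :=
  hC.2.2.1 _ _ (contact_mono_right C hC (hC.2.2.1 _ _ h) ha)

/-- Every proper filter in a Boolean algebra extends to an ultrafilter. -/
lemma exists_ultrafilterSet_superset (F : Set B)
    (hT : ⊤ ∈ F) (hB : ⊥ ∉ F)
    (hup : ∀ a b, a ∈ F → a ≤ b → b ∈ F)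
    (hinf : ∀ a b, a ∈ F → b ∈ F → a ⊓ b ∈ F) :
    ∃ u : Set B, IsUltrafilterSet u ∧ F ⊆ u := by
  set S : Set (Set B) := {v | ⊤ ∈ v ∧ ⊥ ∉ v ∧
    (∀ a b, a ∈ v → a ≤ b → b ∈ v) ∧ (∀ a b, a ∈ v → b ∈ v → a ⊓ b ∈ v)} with hS
  have hchain : ∀ c ⊆ S, IsChain (fun x1 x2 => x1 ⊆ x2) c → c.Nonempty →
      ∃ ub ∈ S, ∀ s ∈ c, s ⊆ ub := by
    intro c hcS hchain ⟨s₀, hs₀⟩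
    refine ⟨⋃₀ c, ⟨⟨s₀, hs₀, (hcS hs₀).1⟩, ?_, ?_, ?_⟩, fun s hs => Set.subset_sUnion_of_mem hs⟩
    · rintro ⟨s, hs, hbot⟩
      exact (hcS hs).2.1 hbot
    · rintro a b ⟨s, hs, ha⟩ hab
      exact ⟨s, hs, (hcS hs).2.2.1 a b ha hab⟩
    · rintro a b ⟨s, hs, ha⟩ ⟨t, ht, hb⟩
      rcases hchain.total hs ht with h | h
      · exact ⟨t, ht, (hcS ht).2.2.2 a b (h ha) hb⟩
      · exact ⟨s, hs, (hcS hs).2.2.2 a b ha (h hb)⟩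
  obtain ⟨m, hFm, hmS, hmax⟩ := zorn_subset_nonempty S hchain F ⟨hT, hB, hup, hinf⟩
  refine ⟨m, ⟨hmS.1, hmS.2.1, hmS.2.2.1, hmS.2.2.2, ?_⟩, hFm⟩
  intro a
  by_cases hac : aᶜ ∈ m
  · exact Or.inr hac
  · left
    -- the filter generated by m ∪ {a}
    set v : Set B := {c | ∃ b ∈ m, b ⊓ a ≤ c} with hv
    have hmv : m ⊆ v := fun b hb => ⟨b, hb, inf_le_left⟩
    have hvS : v ∈ S := by
      refine ⟨hmv hmS.1, ?_, ?_, ?_⟩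
      · rintro ⟨b, hb, hba⟩
        have : b ≤ aᶜ := by
          have := le_bot_iff.mp hba
          exact le_compl_iff_disjoint_right.mpr (disjoint_iff.mpr this)
        exact hac (hmS.2.2.1 b aᶜ hb this)
      · rintro c d ⟨b, hb, hbc⟩ hcd
        exact ⟨b, hb, hbc.trans hcd⟩
      · rintro c d ⟨b₁, hb₁, h₁⟩ ⟨b₂, hb₂, h₂⟩
        refine ⟨b₁ ⊓ b₂, hmS.2.2.2 _ _ hb₁ hb₂, ?_⟩
        have : b₁ ⊓ b₂ ⊓ a ≤ (b₁ ⊓ a) ⊓ (b₂ ⊓ a) := by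
          simp only [le_inf_iff]
          exact ⟨⟨inf_le_left.trans inf_le_left, inf_le_right⟩,
            ⟨inf_le_left.trans inf_le_right, inf_le_right⟩⟩
        exact this.trans (inf_le_inf h₁ h₂)
    have hvm : v = m := le_antisymm (hmax hvS hmv) hmv
    have : a ∈ v := ⟨⊤, hmS.1, inf_le_right⟩
    rwa [hvm] at this

/-- Basic facts about clusters. -/
lemma cluster_facts (C : B → B → Prop) (hc : IsContactRel C) {σ : Set B}
    (hσ : IsCluster C σ) :
    ⊥ ∉ σ ∧ ⊤ ∈ σ ∧ (∀ a b, a ∈ σ → a ≤ b → b ∈ σ) := by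
  obtain ⟨hne, hK1, hK2, hK3⟩ := hσ
  have hbot : (⊥ : B) ∉ σ := by
    intro h
    exact (hc.2.1 _ _ (hK1 ⊥ h ⊥ h)).1 rfl
  have hup : ∀ a b, a ∈ σ → a ≤ b → b ∈ σ := by
    intro a b ha hab
    apply hK3
    intro c hcσ
    exact contact_mono_left C hc (hK1 a ha c hcσ) hab
  obtain ⟨a, ha⟩ := hne
  exact ⟨hbot, hup a ⊤ ha le_top, hup⟩

theorem cluster_iff_ultrafilter (C : B → B → Prop) (hC : IsNormalContactRel C) :
    (∀ σ : Set B, IsCluster C σ ↔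
      ∃ u : Set B, IsUltrafilterSet u ∧ σ = {a : B | ∀ b ∈ u, C a b}) ∧
    (∀ σ : Set B, IsCluster C σ → ∀ a₀ ∈ σ,
      ∃ u : Set B, IsUltrafilterSet u ∧ a₀ ∈ u ∧
        σ = {a : B | ∀ b ∈ u, C a b}) := by
  obtain ⟨hc, hC5, _hC6⟩ := hC
  obtain ⟨hC1, hC2, hC3, hC4⟩ := hc
  -- Backward: for any ultrafilter u the set σ_u is a cluster.
  have hback : ∀ u : Set B, IsUltrafilterSet u → IsCluster C {a : B | ∀ b ∈ u, C a b} := by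
    intro u hu
    obtain ⟨huT, huB, huUp, huInf, huUlt⟩ := hu
    have huNe : ∀ b ∈ u, b ≠ ⊥ := by
      intro b hb hbe; exact huB (hbe ▸ hb)
    -- every member of u is in σ_u
    have husub : ∀ b ∈ u, ∀ b' ∈ u, C b b' := by
      intro b hb b' hb'
      have h1 : b ⊓ b' ∈ u := huInf _ _ hb hb'
      have h2 : C (b ⊓ b') (b ⊓ b') := hC1 _ (huNe _ h1)
      exact contact_mono_left C ⟨hC1, hC2, hC3, hC4⟩
        (contact_mono_right C ⟨hC1, hC2, hC3, hC4⟩ h2 inf_le_right) inf_le_left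
    refine ⟨⟨⊤, fun b hb => ?_⟩, ?_, ?_, ?_⟩
    · exact contact_mono_left C ⟨hC1, hC2, hC3, hC4⟩ (hC1 b (huNe b hb)) le_top
    · -- K1 via C5
      intro a ha b hb
      by_contra hab
      obtain ⟨c, hac, hbc⟩ := hC5 a b hab
      rcases huUlt c with hcu | hcu
      · exact hac (ha c hcu)
      · exact hbc (hb cᶜ hcu)
    · -- K2
      intro a b hab
      by_contra h
      push_neg at h
      obtain ⟨h1, h2⟩ := h
      simp only [Set.mem_setOf_eq, not_forall] at h1 h2
      obtain ⟨c, hcu, hac⟩ := h1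
      obtain ⟨d, hdu, hbd⟩ := h2
      have hcd : c ⊓ d ∈ u := huInf _ _ hcu hdu
      have := hab (c ⊓ d) hcd
      have := hC3 _ _ this
      rcases (hC4 _ _ _).mp this with h | h
      · exact hac (contact_mono_right C ⟨hC1, hC2, hC3, hC4⟩ (hC3 _ _ h) inf_le_left)
      · exact hbd (contact_mono_right C ⟨hC1, hC2, hC3, hC4⟩ (hC3 _ _ h) inf_le_right)
    · -- K3
      intro a h b hb
      exact h b (husub b hb)
  -- The "moreover" part.
  have hmor : ∀ σ : Set B, IsCluster C σ → ∀ a₀ ∈ σ,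
      ∃ u : Set B, IsUltrafilterSet u ∧ a₀ ∈ u ∧
        σ = {a : B | ∀ b ∈ u, C a b} := by
    intro σ hσ a₀ ha₀
    obtain ⟨hbot, htop, hup⟩ := cluster_facts C ⟨hC1, hC2, hC3, hC4⟩ hσ
    obtain ⟨hne, hK1, hK2, hK3⟩ := hσ
    have hdich : ∀ a : B, a ∈ σ ∨ aᶜ ∈ σ := by
      intro a
      exact hK2 a aᶜ (by rwa [sup_compl_eq_top])
    -- the filter generated by {b | bᶜ ∉ σ} ∪ {a₀}
    set G : Set B := {c | ∃ b, bᶜ ∉ σ ∧ b ⊓ a₀ ≤ c} with hG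
    have hGT : ⊤ ∈ G := ⟨⊤, by simpa using hbot, le_top⟩
    have hGB : ⊥ ∉ G := by
      rintro ⟨b, hb, hba⟩
      apply hb
      have : a₀ ≤ bᶜ :=
        le_compl_iff_disjoint_right.mpr (disjoint_iff.mpr (le_bot_iff.mp (inf_comm b a₀ ▸ hba)))
      exact hup a₀ bᶜ ha₀ this
    have hGup : ∀ a b, a ∈ G → a ≤ b → b ∈ G := by
      rintro a b ⟨d, hd, hda⟩ hab
      exact ⟨d, hd, hda.trans hab⟩
    have hGinf : ∀ a b, a ∈ G → b ∈ G → a ⊓ b ∈ G := by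
      rintro a b ⟨d₁, hd₁, h₁⟩ ⟨d₂, hd₂, h₂⟩
      refine ⟨d₁ ⊓ d₂, ?_, ?_⟩
      · rw [compl_inf]
        intro h
        rcases hK2 _ _ h with h | h
        · exact hd₁ h
        · exact hd₂ h
      · have : d₁ ⊓ d₂ ⊓ a₀ ≤ (d₁ ⊓ a₀) ⊓ (d₂ ⊓ a₀) := by
          simp only [le_inf_iff]
          exact ⟨⟨inf_le_left.trans inf_le_left, inf_le_right⟩,
            ⟨inf_le_left.trans inf_le_right, inf_le_right⟩⟩
        exact this.trans (inf_le_inf h₁ h₂)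
    obtain ⟨u, hu, hGu⟩ := exists_ultrafilterSet_superset G hGT hGB hGup hGinf
    obtain ⟨huT, huB, huUp, huInf, huUlt⟩ := hu
    have ha₀u : a₀ ∈ u := hGu ⟨⊤, by simpa using hbot, inf_le_right⟩
    have huσ : u ⊆ σ := by
      intro b hb
      by_contra hbσ
      have hbc : bᶜ ∈ G := ⟨bᶜ, by simpa using hbσ, inf_le_left⟩
      have : b ⊓ bᶜ ∈ u := huInf _ _ hb (hGu hbc)
      rw [inf_compl_eq_bot] at this
      exact huB this
    refine ⟨u, ⟨huT, huB, huUp, huInf, huUlt⟩, ha₀u, ?_⟩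
    ext a
    simp only [Set.mem_setOf_eq]
    constructor
    · intro ha b hb
      exact hK1 a ha b (huσ hb)
    · intro h
      by_contra haσ
      -- get b ∈ σ with ¬ C a b
      have : ¬ ∀ b ∈ σ, C a b := fun hh => haσ (hK3 a hh)
      push_neg at this
      obtain ⟨b, hbσ, hab⟩ := this
      obtain ⟨c, hac, hbc⟩ := hC5 a b hab
      rcases huUlt c with hcu | hcu
      · exact hac (h c hcu)
      · exact hbc (hK1 b hbσ cᶜ (huσ hcu))
  refine ⟨fun σ => ⟨fun hσ => ?_, ?_⟩, hmor⟩
  · obtain ⟨a₀, ha₀⟩ := hσ.1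
    obtain ⟨u, hu, _, hσu⟩ := hmor σ hσ a₀ ha₀
    exact ⟨u, hu, hσu⟩
  · rintro ⟨u, hu, rfl⟩
    exact hback u hu
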